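/- If a sequence of n touching disks of equal diameter d = (b−a)/n covers [a,b] (the i-th disk having diameter segment [a+(i−1)d, a+id]), and points p_1 < ... < p_n satisfy p_i ∈ [a+(i−1)d, a+id] for all i, then this covering is a point-interval coverage of minimum total area among all point-interval coverages for these points, namely n·(d/2)^2·π. -/

import Mathlib

/-- The embedding of the x-axis into the Euclidean plane. -/
noncomputable def pt (x : ℝ) : EuclideanSpace ℝ (Fin 2) :=
  (WithLp.equiv 2 (Fin 2 → ℝ)).symm ![x, 0]

/-- A point-interval coverage for points `p` on the interval `[a,b]`:
`n` closed disks (given by centers `q` and radii `rad`) covering `[a,b]`,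
with the `i`-th disk containing the point `p i`. -/
def IsPIC (n : ℕ) (a b : ℝ) (p : Fin n → ℝ)
    (q : Fin n → EuclideanSpace ℝ (Fin 2)) (rad : Fin n → ℝ) : Prop :=
  (∀ i, 0 ≤ rad i) ∧
  (∀ x : ℝ, x ∈ Set.Icc a b → ∃ i, pt x ∈ Metric.closedBall (q i) (rad i)) ∧
  (∀ i, pt (p i) ∈ Metric.closedBall (q i) (rad i))

lemma dist_pt (x y : ℝ) : dist (pt x) (pt y) = |x - y| := by
  rw [EuclideanSpace.dist_eq]
  have h0 : pt x 0 = x := rfl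
  have h1 : pt x 1 = (0:ℝ) := rfl
  have h0' : pt y 0 = y := rfl
  have h1' : pt y 1 = (0:ℝ) := rfl
  rw [Fin.sum_univ_two, h0, h1, h0', h1']
  simp [Real.dist_eq, sq_abs, Real.sqrt_sq_eq_abs]

lemma abs_le_of_mem (x : ℝ) (q : EuclideanSpace ℝ (Fin 2)) (r : ℝ)
    (h : pt x ∈ Metric.closedBall q r) : |x - q 0| ≤ r := by
  rw [Metric.mem_closedBall, EuclideanSpace.dist_eq, Fin.sum_univ_two] at h
  refine le_trans ?_ h
  have h0 : pt x 0 = x := rfl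
  rw [h0]
  have : |x - q 0| = Real.sqrt (dist x (q 0) ^ 2) := by
    rw [Real.sqrt_sq_eq_abs, Real.dist_eq, abs_abs]
  rw [this]
  exact Real.sqrt_le_sqrt (le_add_of_nonneg_right (by positivity))

theorem stmt19 (n : ℕ) (hn : 0 < n) (a b : ℝ) (hab : a < b)
    (d : ℝ) (hd : d = (b - a) / n)
    (p : Fin n → ℝ) (hmono : StrictMono p)
    (hp : ∀ i : Fin n,
      a + ((i : ℕ) : ℝ) * d ≤ p i ∧ p i ≤ a + (((i : ℕ) : ℝ) + 1) * d) :
    IsPIC n a b p (fun i => pt (a + ((i : ℕ) : ℝ) * d + d / 2)) (fun _ => d / 2) ∧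
    (∀ (q : Fin n → EuclideanSpace ℝ (Fin 2)) (rad : Fin n → ℝ),
      IsPIC n a b p q rad →
      (n : ℝ) * (d / 2) ^ 2 * Real.pi ≤ Real.pi * ∑ i, rad i ^ 2) ∧
    Real.pi * ∑ _i : Fin n, (d / 2) ^ 2 = (n : ℝ) * (d / 2) ^ 2 * Real.pi := by
  have hnR : (0:ℝ) < n := Nat.cast_pos.mpr hn
  have hdpos : 0 < d := by rw [hd]; exact div_pos (by linarith) hnR
  have hba : b - a = n * d := by rw [hd, mul_div_cancel₀ (b - a) hnR.ne']
  refine ⟨⟨fun i => by linarith, ?_, ?_⟩, ?_, ?_⟩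
  · -- coverage
    intro x hx
    obtain ⟨hx1, hx2⟩ := hx
    have hxb : x ≤ a + n * d := by linarith
    by_cases hlt : x < a + n * d
    · set k : ℕ := (⌊(x - a) / d⌋).toNat with hk
      have htnn : 0 ≤ (x - a) / d := div_nonneg (by linarith) hdpos.le
      have hfl : (0:ℤ) ≤ ⌊(x - a) / d⌋ := Int.floor_nonneg.mpr htnn
      have hkr : (k : ℝ) = (⌊(x - a) / d⌋ : ℤ) := by
        rw [hk]; exact_mod_cast Int.toNat_of_nonneg hfl
      have hle : (k : ℝ) ≤ (x - a) / d := by rw [hkr]; exact Int.floor_le _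
      have hlt2 : (x - a) / d < (k : ℝ) + 1 := by rw [hkr]; exact Int.lt_floor_add_one _
      have hklt : k < n := by
        by_contra hge
        push_neg at hge
        have : (n : ℝ) ≤ k := by exact_mod_cast hge
        have : (n : ℝ) ≤ (x - a) / d := le_trans this hle
        have : (n : ℝ) * d ≤ x - a := by
          rwa [le_div_iff₀ hdpos] at this
        linarith
      refine ⟨⟨k, hklt⟩, ?_⟩
      rw [Metric.mem_closedBall, dist_pt]
      have h1 : (k : ℝ) * d ≤ x - a := (le_div_iff₀ hdpos).mp hle
      have h2 : x - a < ((k : ℝ) + 1) * d := by rwa [div_lt_iff₀ hdpos] at hlt2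
      rw [abs_le]
      constructor <;> simp only [Fin.val_mk] <;> nlinarith
    · -- x = b
      have hxe : x = a + n * d := le_antisymm hxb (not_lt.mp hlt)
      refine ⟨⟨n - 1, Nat.sub_lt hn one_pos⟩, ?_⟩
      rw [Metric.mem_closedBall, dist_pt]
      have hc : ((n - 1 : ℕ) : ℝ) = (n : ℝ) - 1 := by
        rw [Nat.cast_sub hn]; simp
      rw [abs_le]
      constructor <;> simp only [Fin.val_mk, hc] <;> nlinarith
  · -- points
    intro i
    rw [Metric.mem_closedBall, dist_pt, abs_le]
    obtain ⟨h1, h2⟩ := hp i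
    constructor <;> nlinarith
  · -- lower bound
    intro q rad ⟨hr, hcov, _⟩
    have hsub : Set.Icc a b ⊆ ⋃ i, Set.Icc (q i 0 - rad i) (q i 0 + rad i) := by
      intro x hx
      obtain ⟨i, hi⟩ := hcov x hx
      have := abs_le.mp (abs_le_of_mem x (q i) (rad i) hi)
      exact Set.mem_iUnion.2 ⟨i, by constructor <;> linarith [this.1, this.2]⟩
    have hμ : MeasureTheory.volume (Set.Icc a b) ≤
        ∑ i : Fin n, MeasureTheory.volume (Set.Icc (q i 0 - rad i) (q i 0 + rad i)) := by
      refine le_trans (MeasureTheory.measure_mono hsub) ?_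
      rw [← tsum_fintype (L := SummationFilter.unconditional _)]
      exact MeasureTheory.measure_iUnion_le _
    rw [Real.volume_Icc] at hμ
    simp only [Real.volume_Icc] at hμ
    have hsum : ∑ i : Fin n, ENNReal.ofReal (q i 0 + rad i - (q i 0 - rad i)) =
        ENNReal.ofReal (∑ i : Fin n, (2 * rad i)) := by
      rw [ENNReal.ofReal_sum_of_nonneg (fun i _ => by linarith [hr i])]
      congr 1; ext i; congr 1; ring
    rw [hsum] at hμ
    have hble : b - a ≤ ∑ i : Fin n, 2 * rad i := by
      have hnn : 0 ≤ ∑ i : Fin n, 2 * rad i :=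
        Finset.sum_nonneg fun i _ => by linarith [hr i]
      exact (ENNReal.ofReal_le_ofReal_iff hnn).mp hμ
    have hcs : (∑ i : Fin n, rad i) ^ 2 ≤ (n : ℝ) * ∑ i : Fin n, rad i ^ 2 := by
      have := sq_sum_le_card_mul_sum_sq (s := (Finset.univ : Finset (Fin n))) (f := rad)
      simpa using this
    have hs2 : (n : ℝ) * d / 2 ≤ ∑ i : Fin n, rad i := by
      rw [← Finset.mul_sum] at hble
      linarith
    have hsq : ((n:ℝ) * d / 2) ^ 2 ≤ (∑ i : Fin n, rad i) ^ 2 := by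
      apply sq_le_sq' <;> nlinarith [Finset.sum_nonneg (fun i (_ : i ∈ Finset.univ) => hr i)]
    have hfin : (n : ℝ) * (d / 2) ^ 2 ≤ ∑ i : Fin n, rad i ^ 2 := by
      nlinarith
    have hπ := Real.pi_pos
    nlinarith
  · simp [Finset.sum_const]
    ring
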